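/- (Proposition: SR dynamics coincides with multiplicative weights) Let W be any fitness matrix, P any population distribution, and r ∈ [0,1]. Then the SR update P' = SR_r(P) satisfies, for every i ∈ [n], Σ_j p'_{ij} = (Σ_j p_{ij} w_{ij}) / w̄(P). In particular, the first marginals of SR_r(P) do not depend on r, and for every i with x_i(P) > 0, x_i(SR_r(P)) = x_i(P) · g_i(P) / w̄(P). -/

import Mathlib

open Finset

noncomputable section

/-- `P` is a population distribution: nonnegative entries summing to 1. -/
def IsPopDist {n m : ℕ} (P : Fin n → Fin m → ℝ) : Prop :=
  (∀ i j, 0 ≤ P i j) ∧ (∑ i, ∑ j, P i j) = 1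

/-- `W` is a fitness matrix: strictly positive entries. -/
def IsFitness {n m : ℕ} (W : Fin n → Fin m → ℝ) : Prop :=
  ∀ i j, 0 < W i j

/-- Average fitness w̄(P) = Σ_{i,j} p_{ij} w_{ij}. -/
def wbar {n m : ℕ} (W P : Fin n → Fin m → ℝ) : ℝ :=
  ∑ i, ∑ j, P i j * W i j

/-- First marginal x_i(P) = Σ_j p_{ij}. -/
def xmarg {n m : ℕ} (P : Fin n → Fin m → ℝ) (i : Fin n) : ℝ :=
  ∑ j, P i j

/-- Second marginal y_j(P) = Σ_i p_{ij}. -/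
def ymarg {n m : ℕ} (P : Fin n → Fin m → ℝ) (j : Fin m) : ℝ :=
  ∑ i, P i j

/-- Selection update p^S_{ij} = p_{ij} w_{ij} / w̄(P). -/
def pS {n m : ℕ} (W P : Fin n → Fin m → ℝ) (i : Fin n) (j : Fin m) : ℝ :=
  P i j * W i j / wbar W P

/-- Recombination-after-selection matrix
  p^{SR}_{ij} = (Σ_l p_{il} w_{il})(Σ_k p_{kj} w_{kj}) / w̄(P)². -/
def pSR {n m : ℕ} (W P : Fin n → Fin m → ℝ) (i : Fin n) (j : Fin m) : ℝ :=
  (∑ l, P i l * W i l) * (∑ k, P k j * W k j) / (wbar W P) ^ 2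

/-- SR update: r·p^{SR}_{ij} + (1−r)·p^S_{ij}. -/
def SRupd {n m : ℕ} (W P : Fin n → Fin m → ℝ) (r : ℝ) (i : Fin n) (j : Fin m) : ℝ :=
  r * pSR W P i j + (1 - r) * pS W P i j

/-- Conditional expected fitness g_i(P) = Σ_j (p_{ij}/x_i(P)) w_{ij}. -/
def gcond {n m : ℕ} (W P : Fin n → Fin m → ℝ) (i : Fin n) : ℝ :=
  ∑ j, (P i j / xmarg P i) * W i j

/-- Marginal expected fitness G_i(P) = Σ_j y_j(P) w_{ij}. -/
def Gmarg {n m : ℕ} (W P : Fin n → Fin m → ℝ) (i : Fin n) : ℝ :=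
  ∑ j, ymarg P j * W i j

/-- Normalizer w̄^R(P) = Σ_{i,j} w_{ij}(r·x_i y_j + (1−r)·p_{ij}). -/
def wbarR {n m : ℕ} (W P : Fin n → Fin m → ℝ) (r : ℝ) : ℝ :=
  ∑ i, ∑ j, W i j * (r * xmarg P i * ymarg P j + (1 - r) * P i j)

/-- RS update: w_{ij}(r·x_i y_j + (1−r)·p_{ij}) / w̄^R(P). -/
def RSupd {n m : ℕ} (W P : Fin n → Fin m → ℝ) (r : ℝ) (i : Fin n) (j : Fin m) : ℝ :=
  W i j * (r * xmarg P i * ymarg P j + (1 - r) * P i j) / wbarR W P r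

/-- Proposition: SR dynamics coincides with multiplicative weights.
The first marginals of `SR_r(P)` equal `(Σ_j p_{ij} w_{ij}) / w̄(P)` independently of `r`,
and for `x_i(P) > 0` they equal `x_i(P)·g_i(P)/w̄(P)`. -/
theorem sr_dynamics_is_pw (n m : ℕ) (hn : 1 ≤ n) (hm : 1 ≤ m)
    (W P : Fin n → Fin m → ℝ) (hW : IsFitness W) (hP : IsPopDist P)
    (r : ℝ) (hr : r ∈ Set.Icc (0 : ℝ) 1) :
    (∀ i, ∑ j, SRupd W P r i j = (∑ j, P i j * W i j) / wbar W P) ∧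
    (∀ i, 0 < xmarg P i →
      ∑ j, SRupd W P r i j = xmarg P i * gcond W P i / wbar W P) := by

  have hwbar : 0 < wbar W P := by
    obtain ⟨hPnn, hPsum⟩ := hP
    have hpos : ∃ i j, 0 < P i j := by
      by_contra h
      push_neg at h
      have : (∑ i, ∑ j, P i j) = 0 := by
        apply Finset.sum_eq_zero; intro i _
        apply Finset.sum_eq_zero; intro j _
        exact le_antisymm (h i j) (hPnn i j)
      simp [this] at hPsum
    obtain ⟨i0, j0, hp0⟩ := hpos
    have hterm : 0 < P i0 j0 * W i0 j0 := mul_pos hp0 (hW i0 j0)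
    have : 0 < ∑ i, ∑ j, P i j * W i j := by
      apply Finset.sum_pos'
      · intro i _; apply Finset.sum_nonneg; intro j _
        exact mul_nonneg (hPnn i j) (le_of_lt (hW i j))
      · exact ⟨i0, Finset.mem_univ i0, Finset.sum_pos' (fun j _ => mul_nonneg (hPnn i0 j) (le_of_lt (hW i0 j))) ⟨j0, Finset.mem_univ j0, hterm⟩⟩
    exact this
  have hne : wbar W P ≠ 0 := ne_of_gt hwbar
  have key : ∀ i, ∑ j, SRupd W P r i j = (∑ j, P i j * W i j) / wbar W P := by
    intro i
    have h1 : ∑ j, pSR W P i j = (∑ l, P i l * W i l) / wbar W P := by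
      have : ∑ j, pSR W P i j
          = (∑ l, P i l * W i l) * (∑ j, ∑ k, P k j * W k j) / (wbar W P) ^ 2 := by
        simp only [pSR]
        rw [← Finset.sum_div, ← Finset.mul_sum]
      rw [this]
      have hsw : (∑ j, ∑ k, P k j * W k j) = wbar W P := by
        rw [wbar, Finset.sum_comm]
      rw [hsw]
      field_simp
    have h2 : ∑ j, pS W P i j = (∑ j, P i j * W i j) / wbar W P := by
      simp only [pS]
      rw [← Finset.sum_div]
    simp only [SRupd]
    rw [Finset.sum_add_distrib, ← Finset.mul_sum, ← Finset.mul_sum, h1, h2]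
    ring
  refine ⟨key, fun i hx => ?_⟩
  rw [key i]
  congr 1
  rw [gcond, Finset.mul_sum]
  apply Finset.sum_congr rfl
  intro j _
  field_simp
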